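/- Let P be the 4-outcome rank-1 projective measurement on C²⊗C² with projectors onto |00⟩, |11⟩, (|01⟩+|10⟩)/√2, (|01⟩−|10⟩)/√2. Then for any separable POVM (F^j)_{j=1}^4, (1/4)Σ_j Tr(F^j P^j) ≤ 3/4. -/

import Mathlib

open Matrix ComplexOrder

noncomputable section

def IsSeparableOp (F : Matrix (Fin 2 × Fin 2) (Fin 2 × Fin 2) ℂ) : Prop :=
  ∃ (K : ℕ) (lam : Fin K → ℝ) (u : Fin K → Fin 2 → ℂ) (v : Fin K → Fin 2 → ℂ),
    (∀ k, 0 ≤ lam k) ∧ (∀ k, ∑ i, ‖u k i‖ ^ 2 = 1) ∧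
    (∀ k, ∑ i, ‖v k i‖ ^ 2 = 1) ∧
    F = ∑ k, (lam k : ℂ) •
      Matrix.vecMulVec (fun p => u k p.1 * v k p.2) (star fun p => u k p.1 * v k p.2)

def IsSeparablePOVM {d : ℕ} (F : Fin d → Matrix (Fin 2 × Fin 2) (Fin 2 × Fin 2) ℂ) : Prop :=
  (∀ j, IsSeparableOp (F j)) ∧ ∑ j, F j = 1

def ket (i j : Fin 2) : Fin 2 × Fin 2 → ℂ := fun p => if p = (i, j) then 1 else 0

/-- The eigenstates |00⟩, |11⟩, ψ⁺, ψ⁻ of the mixed product/entangled measurement. -/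
def mixedVec : Fin 4 → Fin 2 × Fin 2 → ℂ
  | 0 => ket 0 0
  | 1 => ket 1 1
  | 2 => ((Real.sqrt 2)⁻¹ : ℂ) • (ket 0 1 + ket 1 0)
  | 3 => ((Real.sqrt 2)⁻¹ : ℂ) • (ket 0 1 - ket 1 0)

def mixedProj (j : Fin 4) : Matrix (Fin 2 × Fin 2) (Fin 2 × Fin 2) ℂ :=
  Matrix.vecMulVec (mixedVec j) (star (mixedVec j))

/-! ### Auxiliary lemmas -/

lemma trace_rank1_mul_rank1 (w ψ : Fin 2 × Fin 2 → ℂ) :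
    (vecMulVec w (star w) * vecMulVec ψ (star ψ)).trace
      = (star ψ ⬝ᵥ w) * (star w ⬝ᵥ ψ) := by
  simp only [Matrix.trace, Matrix.diag, Matrix.mul_apply, Matrix.vecMulVec_apply,
    dotProduct, Pi.star_apply, Finset.sum_mul_sum]
  exact Finset.sum_congr rfl fun p _ => Finset.sum_congr rfl fun q _ => by ring

lemma dot_star_comm (w ψ : Fin 2 × Fin 2 → ℂ) :
    star w ⬝ᵥ ψ = star (star ψ ⬝ᵥ w) := by
  simp only [dotProduct, star_sum, star_mul', star_star, Pi.star_apply]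
  exact Finset.sum_congr rfl fun p _ => by ring

lemma mul_conj_eq_normSq (c : ℂ) : c * star c = (Complex.normSq c : ℂ) := by
  rw [show (star c) = (starRingEnd ℂ) c from rfl, Complex.mul_conj]

lemma trace_rank1 (w : Fin 2 × Fin 2 → ℂ) :
    (vecMulVec w (star w)).trace = ∑ p, (Complex.normSq (w p) : ℂ) := by
  simp [Matrix.trace, Matrix.diag, Matrix.vecMulVec_apply, Complex.mul_conj]

lemma dot_mixedVec_zero (w : Fin 2 × Fin 2 → ℂ) : star (mixedVec 0) ⬝ᵥ w = w (0,0) := by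
  simp [mixedVec, ket, dotProduct, Fintype.sum_prod_type, Fin.sum_univ_two, Prod.ext_iff]

lemma dot_mixedVec_one (w : Fin 2 × Fin 2 → ℂ) : star (mixedVec 1) ⬝ᵥ w = w (1,1) := by
  simp [mixedVec, ket, dotProduct, Fintype.sum_prod_type, Fin.sum_univ_two, Prod.ext_iff]

lemma dot_mixedVec_two (w : Fin 2 × Fin 2 → ℂ) :
    star (mixedVec 2) ⬝ᵥ w = ((Real.sqrt 2)⁻¹ : ℂ) * (w (0,1) + w (1,0)) := by
  simp [mixedVec, ket, dotProduct, Fintype.sum_prod_type, Fin.sum_univ_two, Prod.ext_iff,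
    Complex.conj_ofReal]
  ring

lemma dot_mixedVec_three (w : Fin 2 × Fin 2 → ℂ) :
    star (mixedVec 3) ⬝ᵥ w = ((Real.sqrt 2)⁻¹ : ℂ) * (w (0,1) - w (1,0)) := by
  simp [mixedVec, ket, dotProduct, Fintype.sum_prod_type, Fin.sum_univ_two, Prod.ext_iff,
    Complex.conj_ofReal]
  ring

/-- The main structural lemma for separable operators. -/
lemma sep_data (F : Matrix (Fin 2 × Fin 2) (Fin 2 × Fin 2) ℂ) (hF : IsSeparableOp F) :
    ∃ (K : ℕ) (lam : Fin K → ℝ) (u v : Fin K → Fin 2 → ℂ),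
      (∀ k, 0 ≤ lam k) ∧
      (∀ k, Complex.normSq (u k 0) + Complex.normSq (u k 1) = 1) ∧
      (∀ k, Complex.normSq (v k 0) + Complex.normSq (v k 1) = 1) ∧
      F.trace.re = ∑ k, lam k ∧
      (∀ j, ((F * mixedProj j).trace).re
        = ∑ k, lam k * Complex.normSq (star (mixedVec j) ⬝ᵥ fun p => u k p.1 * v k p.2)) := by
  obtain ⟨K, lam, u, v, hl, hu, hv, hFeq⟩ := hF
  have hu' : ∀ k, Complex.normSq (u k 0) + Complex.normSq (u k 1) = 1 := by
    intro k
    have := hu k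
    simpa [Fin.sum_univ_two, Complex.sq_norm] using this
  have hv' : ∀ k, Complex.normSq (v k 0) + Complex.normSq (v k 1) = 1 := by
    intro k
    have := hv k
    simpa [Fin.sum_univ_two, Complex.sq_norm] using this
  refine ⟨K, lam, u, v, hl, hu', hv', ?_, ?_⟩
  · rw [hFeq, Matrix.trace_sum]
    rw [Complex.re_sum]
    refine Finset.sum_congr rfl fun k _ => ?_
    rw [Matrix.trace_smul, trace_rank1]
    have hsum : ∑ p : Fin 2 × Fin 2, (Complex.normSq (u k p.1 * v k p.2) : ℂ)
        = ((Complex.normSq (u k 0) + Complex.normSq (u k 1)) *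
           (Complex.normSq (v k 0) + Complex.normSq (v k 1)) : ℝ) := by
      simp [Fintype.sum_prod_type, Fin.sum_univ_two, Complex.normSq_mul]
      ring
    rw [hsum, hu' k, hv' k]
    simp
  · intro j
    rw [hFeq, Matrix.sum_mul, Matrix.trace_sum, Complex.re_sum]
    refine Finset.sum_congr rfl fun k _ => ?_
    rw [Matrix.smul_mul, Matrix.trace_smul, mixedProj, trace_rank1_mul_rank1,
      dot_star_comm (fun p => u k p.1 * v k p.2) (mixedVec j)]
    rw [smul_eq_mul, mul_conj_eq_normSq, ← Complex.ofReal_mul, Complex.ofReal_re]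

lemma invsqrt2_normSq : Complex.normSq ((Real.sqrt 2)⁻¹ : ℂ) = 1/2 := by
  rw [Complex.normSq_inv, Complex.normSq_ofReal, Real.mul_self_sqrt (by norm_num)]
  norm_num

lemma ent_bound_add (a b c d : ℂ)
    (hu : Complex.normSq a + Complex.normSq b = 1)
    (hv : Complex.normSq c + Complex.normSq d = 1) :
    Complex.normSq (a * d + b * c) ≤ 1 := by
  have h1 : Complex.normSq (a * d + b * c) ≤ (‖a*d‖ + ‖b*c‖)^2 := by
    rw [← Complex.sq_norm]
    have := norm_add_le (a*d) (b*c)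
    nlinarith [norm_nonneg (a*d + b*c), norm_nonneg (a*d), norm_nonneg (b*c)]
  refine h1.trans ?_
  rw [norm_mul, norm_mul]
  rw [← Complex.sq_norm a, ← Complex.sq_norm b] at hu
  rw [← Complex.sq_norm c, ← Complex.sq_norm d] at hv
  nlinarith [sq_nonneg (‖a‖ * ‖c‖ - ‖b‖ * ‖d‖),
    norm_nonneg a, norm_nonneg b, norm_nonneg c, norm_nonneg d]

lemma ent_bound_sub (a b c d : ℂ)
    (hu : Complex.normSq a + Complex.normSq b = 1)
    (hv : Complex.normSq c + Complex.normSq d = 1) :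
    Complex.normSq (a * d - b * c) ≤ 1 := by
  have := ent_bound_add a (-b) c d (by simpa using hu) hv
  simpa [sub_eq_add_neg] using this

lemma mixedVec_normSq (j : Fin 4) : ∑ p, Complex.normSq (mixedVec j p) = 1 := by
  have h : Real.sqrt 2 * Real.sqrt 2 = 2 := Real.mul_self_sqrt (by norm_num)
  fin_cases j <;>
    simp [mixedVec, ket, Fintype.sum_prod_type, Fin.sum_univ_two, Prod.ext_iff,
      Complex.normSq, Complex.ofReal_inv, -Finset.sum_boole] <;>
    nlinarith [Real.sqrt_nonneg 2]

lemma proj_trace_re (j : Fin 4) : ((mixedProj j).trace).re = 1 := by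
  rw [mixedProj, trace_rank1, Complex.re_sum]
  simpa using mixedVec_normSq j

theorem qsep_mixed_measurement_bound
    (F : Fin 4 → Matrix (Fin 2 × Fin 2) (Fin 2 × Fin 2) ℂ) (hF : IsSeparablePOVM F) :
    (1 / 4 : ℝ) * ∑ j, ((F j * mixedProj j).trace).re ≤ 3 / 4 := by
  obtain ⟨hsep, hsum⟩ := hF
  -- nonnegativity of all cross terms
  have hnn : ∀ j i : Fin 4, 0 ≤ ((F j * mixedProj i).trace).re := by
    intro j i
    obtain ⟨K, lam, u, v, hl, hu, hv, _, hformula⟩ := sep_data (F j) (hsep j)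
    rw [hformula i]
    exact Finset.sum_nonneg fun k _ => mul_nonneg (hl k) (Complex.normSq_nonneg _)
  -- sum of traces is 4
  have htr4 : ∑ j, ((F j).trace).re = 4 := by
    have h1 : (∑ j, F j).trace = (1 : Matrix (Fin 2 × Fin 2) (Fin 2 × Fin 2) ℂ).trace := by
      rw [hsum]
    rw [Matrix.trace_sum, Matrix.trace_one] at h1
    have := congrArg Complex.re h1
    rw [Complex.re_sum] at this
    simpa using this
  -- sum over j of (F j * P i).trace.re = 1
  have hPsum : ∀ i : Fin 4, ∑ j, ((F j * mixedProj i).trace).re = 1 := by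
    intro i
    have h1 : ∑ j, (F j * mixedProj i) = mixedProj i := by
      rw [← Finset.sum_mul, hsum, one_mul]
    have h2 := congrArg (fun M => (Matrix.trace M).re) h1
    simp only [Matrix.trace_sum, Complex.re_sum] at h2
    rw [h2, proj_trace_re]
  -- g j j ≤ 1 for product outcomes
  have hle1 : ∀ i : Fin 4, ((F i * mixedProj i).trace).re ≤ 1 := by
    intro i
    rw [← hPsum i]
    exact Finset.single_le_sum (fun j _ => hnn j i) (Finset.mem_univ i)
  -- g 0 0 ≤ Tr F 0, g 1 1 ≤ Tr F 1
  have hprod : ∀ i : Fin 4, i = 0 ∨ i = 1 →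
      ((F i * mixedProj i).trace).re ≤ ((F i).trace).re := by
    intro i hi
    obtain ⟨K, lam, u, v, hl, hu, hv, htr, hformula⟩ := sep_data (F i) (hsep i)
    rw [hformula i, htr]
    refine Finset.sum_le_sum fun k _ => ?_
    have hb : Complex.normSq (star (mixedVec i) ⬝ᵥ fun p => u k p.1 * v k p.2) ≤ 1 := by
      rcases hi with rfl | rfl
      · rw [dot_mixedVec_zero]
        simp only [Complex.normSq_mul]
        nlinarith [Complex.normSq_nonneg (u k 0), Complex.normSq_nonneg (u k 1),
          Complex.normSq_nonneg (v k 0), Complex.normSq_nonneg (v k 1), hu k, hv k]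
      · rw [dot_mixedVec_one]
        simp only [Complex.normSq_mul]
        nlinarith [Complex.normSq_nonneg (u k 0), Complex.normSq_nonneg (u k 1),
          Complex.normSq_nonneg (v k 0), Complex.normSq_nonneg (v k 1), hu k, hv k]
    nlinarith [hl k]
  -- entangled outcomes: 2 * g i i ≤ Tr F i for i = 2, 3
  have hent : ∀ i : Fin 4, i = 2 ∨ i = 3 →
      2 * ((F i * mixedProj i).trace).re ≤ ((F i).trace).re := by
    intro i hi
    obtain ⟨K, lam, u, v, hl, hu, hv, htr, hformula⟩ := sep_data (F i) (hsep i)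
    rw [hformula i, htr, Finset.mul_sum]
    refine Finset.sum_le_sum fun k _ => ?_
    have hb : Complex.normSq (star (mixedVec i) ⬝ᵥ fun p => u k p.1 * v k p.2) ≤ 1/2 := by
      rcases hi with rfl | rfl
      · rw [dot_mixedVec_two, Complex.normSq_mul, invsqrt2_normSq]
        have := ent_bound_add (u k 0) (u k 1) (v k 0) (v k 1) (hu k) (hv k)
        nlinarith
      · rw [dot_mixedVec_three, Complex.normSq_mul, invsqrt2_normSq]
        have := ent_bound_sub (u k 0) (u k 1) (v k 0) (v k 1) (hu k) (hv k)
        nlinarith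
    nlinarith [hl k]
  have h0 := hle1 0
  have h1 := hle1 1
  have h0' := hprod 0 (Or.inl rfl)
  have h1' := hprod 1 (Or.inr rfl)
  have h2 := hent 2 (Or.inl rfl)
  have h3 := hent 3 (Or.inr rfl)
  rw [Fin.sum_univ_four] at htr4 ⊢
  linarith

end
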